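/- Let (B_j)_{j=1}^β be a partition of [0,1)^d into β ≥ N measurable sets of Lebesgue measure 1/β each, and let P = (p_1,...,p_N) be a generalized stratified sampling scheme based on this partition: a uniformly random N-element subset of strata is chosen, one point placed independently and uniformly in each chosen stratum, and the points are randomly permuted. Then for every measurable A ⊆ [0,1)^d and every 1 ≤ t ≤ N, P(p_1 ∈ A, ..., p_t ∈ A) ≤ λ^d(A)^t = ∏_{j=1}^t P(p_j ∈ A). -/

import Mathlib

open MeasureTheory Finset
open scoped ENNReal NNReal Classical

private lemma inj_comp_equiv_sum {b n : ℕ} (F : (Fin n → Fin b) → ℝ≥0∞) (σ : Equiv.Perm (Fin n)) :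
    ∑ k ∈ Finset.univ.filter fun k : Fin n → Fin b => Function.Injective k, F (k ∘ σ)
  = ∑ k ∈ Finset.univ.filter fun k : Fin n → Fin b => Function.Injective k, F k := by
  apply Finset.sum_nbij' (i := fun k => k ∘ σ) (j := fun k => k ∘ σ.symm)
  · intro k hk
    simp only [mem_filter, mem_univ, true_and] at *
    exact hk.comp σ.injective
  · intro k hk
    simp only [mem_filter, mem_univ, true_and] at *
    exact hk.comp σ.symm.injective
  · intro k _; funext i; simp
  · intro k _; funext i; simp
  · intro k _; rfl

private lemma sum_inj_cons {b n : ℕ} (G : Fin b → (Fin n → Fin b) → ℝ≥0∞) :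
    ∑ k ∈ Finset.univ.filter fun k : Fin (n+1) → Fin b => Function.Injective k,
      G (k 0) (Fin.tail k)
  = ∑ k ∈ Finset.univ.filter fun k : Fin n → Fin b => Function.Injective k,
      ∑ j ∈ (Finset.image k Finset.univ)ᶜ, G j k := by
  rw [← Finset.sum_sigma (Finset.univ.filter fun k : Fin n → Fin b => Function.Injective k)
      (fun k => (Finset.image k Finset.univ)ᶜ) (fun p => G p.2 p.1)]
  apply Finset.sum_nbij' (i := fun k => ⟨Fin.tail k, k 0⟩) (j := fun p => Fin.cons p.2 p.1)
  · intro k hk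
    simp only [mem_filter, mem_univ, true_and] at hk
    simp only [Finset.mem_sigma, mem_filter, mem_univ, true_and, Finset.mem_compl,
      Finset.mem_image, not_exists]
    refine ⟨hk.comp (Fin.succ_injective n), fun i h => ?_⟩
    exact Fin.succ_ne_zero i (hk h)
  · intro p hp
    simp only [Finset.mem_sigma, mem_filter, mem_univ, true_and, Finset.mem_compl,
      Finset.mem_image, not_exists] at hp
    simp only [mem_filter, mem_univ, true_and]
    rw [Fin.cons_injective_iff]
    refine ⟨fun hr => ?_, hp.1⟩
    obtain ⟨i, hi⟩ := hr
    exact hp.2 i hi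
  · intro k _; exact Fin.cons_self_tail k
  · intro p _
    ext
    · simp [Fin.tail_cons]
    · simp
  · intro k _; simp [Fin.tail_cons]
private lemma sum_inj_tail {b n : ℕ} (hn : n ≤ b) (g : (Fin n → Fin b) → ℝ≥0∞) :
    ∑ k ∈ Finset.univ.filter fun k : Fin (n+1) → Fin b => Function.Injective k,
      g (Fin.tail k)
  = ((b - n : ℕ) : ℝ≥0∞) *
      ∑ k ∈ Finset.univ.filter fun k : Fin n → Fin b => Function.Injective k, g k := by
  rw [sum_inj_cons (fun _ k => g k), Finset.mul_sum]
  apply Finset.sum_congr rfl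
  intro k hk
  simp only [mem_filter, mem_univ, true_and] at hk
  rw [Finset.sum_const, Finset.card_compl, Finset.card_image_of_injective _ hk]
  simp [nsmul_eq_mul]

private lemma sum_inj_init {b n : ℕ} (hn : n ≤ b) (g : (Fin n → Fin b) → ℝ≥0∞) :
    ∑ k ∈ Finset.univ.filter fun k : Fin (n+1) → Fin b => Function.Injective k,
      g (Fin.init k)
  = ((b - n : ℕ) : ℝ≥0∞) *
      ∑ k ∈ Finset.univ.filter fun k : Fin n → Fin b => Function.Injective k, g k := by
  rw [← inj_comp_equiv_sum (fun k => g (Fin.init k)) (finRotate (n+1))]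
  rw [← sum_inj_tail hn g]
  apply Finset.sum_congr rfl
  intro k _
  congr 1
  funext i
  simp only [Fin.init, Function.comp_apply, Fin.tail]
  rw [finRotate_succ_apply, Fin.coeSucc_eq_succ]

private lemma sum_inj_castLE {b t : ℕ} (f : (Fin t → Fin b) → ℝ≥0∞) :
    ∀ n, n ≤ b → ∀ (h : t ≤ n),
    (∑ k ∈ Finset.univ.filter fun k : Fin n → Fin b => Function.Injective k,
      f (fun i => k (Fin.castLE h i)))
  = (∏ i ∈ Finset.Ico t n, ((b - i : ℕ) : ℝ≥0∞)) *
      ∑ k ∈ Finset.univ.filter fun k : Fin t → Fin b => Function.Injective k, f k := by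
  intro n
  induction n with
  | zero => intro _ h
            interval_cases t
            simp only [Nat.le_refl, Finset.Ico_self, Finset.prod_empty, one_mul]
            exact Finset.sum_congr rfl fun k _ => congrArg f (funext fun i => i.elim0)
  | succ m ih =>
    intro hm1 h
    rcases Nat.lt_or_ge t (m+1) with hlt | hge
    · have ht' : t ≤ m := Nat.lt_succ_iff.mp hlt
      have : ∀ k : Fin (m+1) → Fin b, (fun i => k (Fin.castLE h i))
          = (fun i => (Fin.init k) (Fin.castLE ht' i)) := by
        intro k; funext i
        simp only [Fin.init]
        congr 1
      calc (∑ k ∈ Finset.univ.filter fun k : Fin (m+1) → Fin b => Function.Injective k,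
              f (fun i => k (Fin.castLE h i)))
          = ∑ k ∈ Finset.univ.filter fun k : Fin (m+1) → Fin b => Function.Injective k,
              (fun u : Fin m → Fin b => f (fun i => u (Fin.castLE ht' i))) (Fin.init k) := by
            apply Finset.sum_congr rfl; intro k _; rw [this k]
        _ = ((b - m : ℕ) : ℝ≥0∞) *
              ∑ k ∈ Finset.univ.filter fun k : Fin m → Fin b => Function.Injective k,
                f (fun i => k (Fin.castLE ht' i)) := by
            exact sum_inj_init (le_of_lt (Nat.lt_of_lt_of_le (Nat.lt_succ_self m) hm1))
              (fun u => f (fun i => u (Fin.castLE ht' i)))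
        _ = (∏ i ∈ Finset.Ico t (m+1), ((b - i : ℕ) : ℝ≥0∞)) *
              ∑ k ∈ Finset.univ.filter fun k : Fin t → Fin b => Function.Injective k, f k := by
            rw [ih (le_of_lt (Nat.lt_of_lt_of_le (Nat.lt_succ_self m) hm1)) ht',
              ← mul_assoc, Finset.prod_Ico_succ_top ht', mul_comm ((b - m : ℕ) : ℝ≥0∞)]
    · have : t = m + 1 := le_antisymm h hge
      subst this
      simp only [Finset.Ico_self, Finset.prod_empty, one_mul]
      exact Finset.sum_congr rfl fun k _ =>
        congrArg f (funext fun i => congrArg k (by ext; simp))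
private lemma two_mul_mul_le_sq_add_sq (x y : ℝ≥0∞) : 2 * (x * y) ≤ x ^ 2 + y ^ 2 := by
  rcases eq_or_ne x ⊤ with hx | hx
  · have : x ^ 2 = ⊤ := by simp [hx, pow_two]
    simp [this]
  rcases eq_or_ne y ⊤ with hy | hy
  · have : y ^ 2 = ⊤ := by simp [hy, pow_two]
    simp [this]
  lift x to ℝ≥0 using hx
  lift y to ℝ≥0 using hy
  have h : (2 : ℝ≥0) * (x * y) ≤ x ^ 2 + y ^ 2 := by
    have := two_mul_le_add_sq (x : ℝ) (y : ℝ)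
    rw [← NNReal.coe_le_coe]
    push_cast
    linarith
  calc (2 : ℝ≥0∞) * (x * y) = ((2 * (x * y) : ℝ≥0) : ℝ≥0∞) := by push_cast; ring
    _ ≤ ((x ^ 2 + y ^ 2 : ℝ≥0) : ℝ≥0∞) := by exact_mod_cast h
    _ = (x : ℝ≥0∞) ^ 2 + (y : ℝ≥0∞) ^ 2 := by push_cast; ring

private lemma sum_erase_comm {ι : Type*} [DecidableEq ι] (s : Finset ι) (h : ι → ι → ℝ≥0∞) :
    ∑ i ∈ s, ∑ j ∈ s.erase i, h i j = ∑ j ∈ s, ∑ i ∈ s.erase j, h i j := by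
  have key : ∀ (H : ι → ι → ℝ≥0∞), ∑ i ∈ s, ∑ j ∈ s.erase i, H i j
      = ∑ i ∈ s, ∑ j ∈ s, if j ≠ i then H i j else 0 := by
    intro H
    refine Finset.sum_congr rfl fun i _ => ?_
    rw [← Finset.sum_filter, Finset.filter_ne']
  rw [key, key]
  rw [Finset.sum_comm]
  refine Finset.sum_congr rfl fun i _ => Finset.sum_congr rfl fun j _ => ?_
  by_cases hij : i ≠ j <;> simp [hij, ne_comm]

private lemma pair_sum_le {ι : Type*} [DecidableEq ι] (s : Finset ι) (f : ι → ℝ≥0∞) :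
    ∑ i ∈ s, ∑ j ∈ s.erase i, f i * f j
      ≤ ((s.card - 1 : ℕ) : ℝ≥0∞) * ∑ i ∈ s, f i ^ 2 := by
  rw [← ENNReal.mul_le_mul_iff_right (a := (2:ℝ≥0∞)) two_ne_zero ENNReal.ofNat_ne_top]
  calc 2 * ∑ i ∈ s, ∑ j ∈ s.erase i, f i * f j
      = ∑ i ∈ s, ∑ j ∈ s.erase i, 2 * (f i * f j) := by
        rw [Finset.mul_sum]; exact Finset.sum_congr rfl fun i _ => Finset.mul_sum _ _ _
    _ ≤ ∑ i ∈ s, ∑ j ∈ s.erase i, (f i ^ 2 + f j ^ 2) := by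
        exact Finset.sum_le_sum fun i _ => Finset.sum_le_sum fun j _ =>
          two_mul_mul_le_sq_add_sq _ _
    _ = (∑ i ∈ s, ∑ j ∈ s.erase i, f i ^ 2) + ∑ i ∈ s, ∑ j ∈ s.erase i, f j ^ 2 := by
        rw [← Finset.sum_add_distrib]
        exact Finset.sum_congr rfl fun i _ => Finset.sum_add_distrib
    _ = 2 * (((s.card - 1 : ℕ) : ℝ≥0∞) * ∑ i ∈ s, f i ^ 2) := by
        rw [sum_erase_comm s (fun i j => f j ^ 2)]
        have h1 : ∀ g : ι → ℝ≥0∞, ∑ i ∈ s, ∑ _j ∈ s.erase i, g i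
            = ((s.card - 1 : ℕ) : ℝ≥0∞) * ∑ i ∈ s, g i := by
          intro g
          rw [Finset.mul_sum]
          refine Finset.sum_congr rfl fun i hi => ?_
          rw [Finset.sum_const, Finset.card_erase_of_mem hi, nsmul_eq_mul]
        rw [h1]; ring
private noncomputable def Pfun (b : ℕ) (a : Fin b → ℝ≥0∞) (t : ℕ) : ℝ≥0∞ :=
  ∑ k ∈ Finset.univ.filter fun k : Fin t → Fin b => Function.Injective k,
    ∏ i : Fin t, a (k i)

private noncomputable def Qfun (b : ℕ) (a : Fin b → ℝ≥0∞) (s : ℕ) : ℝ≥0∞ :=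
  ∑ k ∈ Finset.univ.filter fun k : Fin (s+1) → Fin b => Function.Injective k,
    a (k 0) * ∏ i : Fin (s+1), a (k i)

private lemma sum_coord_eq_Q {b s : ℕ} (a : Fin b → ℝ≥0∞) (i : Fin (s+1)) :
    ∑ k ∈ Finset.univ.filter fun k : Fin (s+1) → Fin b => Function.Injective k,
      a (k i) * ∏ m : Fin (s+1), a (k m) = Qfun b a s := by
  rw [Qfun, ← inj_comp_equiv_sum (fun k => a (k 0) * ∏ m : Fin (s+1), a (k m)) (Equiv.swap 0 i)]
  refine Finset.sum_congr rfl fun k _ => ?_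
  have h1 : (k ∘ (Equiv.swap 0 i)) 0 = k i := by
    simp [Equiv.swap_apply_left]
  have h2 : ∏ m : Fin (s+1), a ((k ∘ (Equiv.swap 0 i)) m) = ∏ m : Fin (s+1), a (k m) :=
    Equiv.prod_comp (Equiv.swap 0 i) (fun m => a (k m))
  rw [h1, h2]

private lemma image_cons {b n : ℕ} (j : Fin b) (u : Fin n → Fin b) :
    Finset.image (Fin.cons j u : Fin (n+1) → Fin b) Finset.univ
      = insert j (Finset.image u Finset.univ) := by
  ext x
  simp only [Finset.mem_image, Finset.mem_insert, Finset.mem_univ, true_and]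
  constructor
  · rintro ⟨i, rfl⟩
    rcases Fin.eq_zero_or_eq_succ i with rfl | ⟨m, rfl⟩
    · left; simp
    · right; exact ⟨m, by simp⟩
  · rintro (rfl | ⟨m, rfl⟩)
    · exact ⟨0, by simp⟩
    · exact ⟨m.succ, by simp⟩

private lemma identity_i {b s : ℕ} (a : Fin b → ℝ≥0∞) :
    (∑ j, a j) * Pfun b a (s+1) = (s+1 : ℕ) * Qfun b a s + Pfun b a (s+2) := by
  have lhs : (∑ j, a j) * Pfun b a (s+1)
      = ∑ k ∈ Finset.univ.filter fun k : Fin (s+1) → Fin b => Function.Injective k,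
          ∑ j : Fin b, a j * ∏ i : Fin (s+1), a (k i) := by
    rw [Pfun, Finset.mul_sum]
    exact Finset.sum_congr rfl fun k _ => Finset.sum_mul _ _ _
  rw [lhs]
  have split : ∀ k ∈ Finset.univ.filter fun k : Fin (s+1) → Fin b => Function.Injective k,
      (∑ j : Fin b, a j * ∏ i : Fin (s+1), a (k i))
      = (∑ j ∈ Finset.image k Finset.univ, a j * ∏ i : Fin (s+1), a (k i))
        + ∑ j ∈ (Finset.image k Finset.univ)ᶜ, a j * ∏ i : Fin (s+1), a (k i) := by
    intro k _
    rw [Finset.sum_add_sum_compl]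
  rw [Finset.sum_congr rfl split, Finset.sum_add_distrib]
  congr 1
  · -- in-image part = (s+1) * Q
    have h1 : ∀ k ∈ Finset.univ.filter fun k : Fin (s+1) → Fin b => Function.Injective k,
        (∑ j ∈ Finset.image k Finset.univ, a j * ∏ i : Fin (s+1), a (k i))
        = ∑ i : Fin (s+1), a (k i) * ∏ m : Fin (s+1), a (k m) := by
      intro k hk
      simp only [Finset.mem_filter, Finset.mem_univ, true_and] at hk
      rw [Finset.sum_image (fun x _ y _ h => hk h)]
    rw [Finset.sum_congr rfl h1, Finset.sum_comm]
    rw [Finset.sum_congr rfl fun i _ => sum_coord_eq_Q a i]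
    simp [Finset.sum_const, nsmul_eq_mul]
  · -- out-of-image part = P (s+2)
    rw [Pfun, ← sum_inj_cons (fun j u => a j * ∏ i : Fin (s+1), a (u i))]
    exact Finset.sum_congr rfl fun k _ => ((Fin.prod_univ_succ fun i => a (k i)).symm)

private lemma identity_ii {b s : ℕ} (a : Fin b → ℝ≥0∞) :
    Pfun b a (s+2) ≤ ((b - (s+1) : ℕ) : ℝ≥0∞) * Qfun b a s := by
  have hP : Pfun b a (s+2)
      = ∑ u ∈ Finset.univ.filter fun k : Fin s → Fin b => Function.Injective k,
          ∑ i ∈ (Finset.image u Finset.univ)ᶜ, ∑ j ∈ ((Finset.image u Finset.univ)ᶜ).erase i,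
            (a i * a j) * ∏ m : Fin s, a (u m) := by
    calc Pfun b a (s+2)
        = ∑ k ∈ Finset.univ.filter fun k : Fin (s+2) → Fin b => Function.Injective k,
            a (k 0) * ∏ i : Fin (s+1), a (Fin.tail k i) := by
          rw [Pfun]
          exact Finset.sum_congr rfl fun k _ => (Fin.prod_univ_succ fun i => a (k i))
      _ = ∑ k ∈ Finset.univ.filter fun k : Fin (s+1) → Fin b => Function.Injective k,
            ∑ j ∈ (Finset.image k Finset.univ)ᶜ, a j * ∏ i : Fin (s+1), a (k i) :=
          sum_inj_cons (fun j u => a j * ∏ i : Fin (s+1), a (u i))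
      _ = ∑ k ∈ Finset.univ.filter fun k : Fin (s+1) → Fin b => Function.Injective k,
            ∑ j ∈ ((Finset.image (Fin.tail k) Finset.univ)ᶜ).erase (k 0),
              (a (k 0) * a j) * ∏ m : Fin s, a (Fin.tail k m) := by
          refine Finset.sum_congr rfl fun k _ => ?_
          have himg : (Finset.image k Finset.univ)ᶜ
              = ((Finset.image (Fin.tail k) Finset.univ)ᶜ).erase (k 0) := by
            conv_lhs => rw [← Fin.cons_self_tail k]
            rw [image_cons, Finset.compl_insert]
          rw [himg]
          refine Finset.sum_congr rfl fun j _ => ?_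
          rw [Fin.prod_univ_succ (fun i : Fin (s+1) => a (k i))]
          have : Fin.tail k = fun m => k m.succ := rfl
          rw [this]
          ring
      _ = ∑ u ∈ Finset.univ.filter fun k : Fin s → Fin b => Function.Injective k,
            ∑ i ∈ (Finset.image u Finset.univ)ᶜ, ∑ j ∈ ((Finset.image u Finset.univ)ᶜ).erase i,
              (a i * a j) * ∏ m : Fin s, a (u m) :=
          sum_inj_cons (fun i (u : Fin s → Fin b) =>
            ∑ j ∈ ((Finset.image u Finset.univ)ᶜ).erase i, (a i * a j) * ∏ m : Fin s, a (u m))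
  have hQ : Qfun b a s
      = ∑ u ∈ Finset.univ.filter fun k : Fin s → Fin b => Function.Injective k,
          ∑ i ∈ (Finset.image u Finset.univ)ᶜ, a i ^ 2 * ∏ m : Fin s, a (u m) := by
    calc Qfun b a s
        = ∑ k ∈ Finset.univ.filter fun k : Fin (s+1) → Fin b => Function.Injective k,
            a (k 0) ^ 2 * ∏ m : Fin s, a (Fin.tail k m) := by
          rw [Qfun]
          refine Finset.sum_congr rfl fun k _ => ?_
          rw [Fin.prod_univ_succ (fun i : Fin (s+1) => a (k i))]
          have : Fin.tail k = fun m => k m.succ := rfl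
          rw [this]
          ring
      _ = _ := sum_inj_cons (fun i (u : Fin s → Fin b) => a i ^ 2 * ∏ m : Fin s, a (u m))
  rw [hP, hQ, Finset.mul_sum]
  refine Finset.sum_le_sum fun u hu => ?_
  simp only [Finset.mem_filter, Finset.mem_univ, true_and] at hu
  have hcard : ((Finset.image u Finset.univ)ᶜ).card = b - s := by
    rw [Finset.card_compl, Finset.card_image_of_injective _ hu]
    simp
  calc ∑ i ∈ (Finset.image u Finset.univ)ᶜ, ∑ j ∈ ((Finset.image u Finset.univ)ᶜ).erase i,
        (a i * a j) * ∏ m : Fin s, a (u m)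
      = (∑ i ∈ (Finset.image u Finset.univ)ᶜ, ∑ j ∈ ((Finset.image u Finset.univ)ᶜ).erase i,
          a i * a j) * ∏ m : Fin s, a (u m) := by
        rw [Finset.sum_mul]
        exact Finset.sum_congr rfl fun i _ => (Finset.sum_mul _ _ _).symm
    _ ≤ ((((Finset.image u Finset.univ)ᶜ).card - 1 : ℕ) : ℝ≥0∞)
          * (∑ i ∈ (Finset.image u Finset.univ)ᶜ, a i ^ 2) * ∏ m : Fin s, a (u m) := by
        exact mul_le_mul_left (pair_sum_le _ a) _
    _ = ((b - (s+1) : ℕ) : ℝ≥0∞) * ∑ i ∈ (Finset.image u Finset.univ)ᶜ,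
          a i ^ 2 * ∏ m : Fin s, a (u m) := by
        rw [hcard, Nat.sub_sub, mul_assoc, Finset.sum_mul]

private lemma step_ineq {b t : ℕ} (ht : 1 ≤ t) (a : Fin b → ℝ≥0∞) :
    (b : ℝ≥0∞) * Pfun b a (t+1)
      ≤ ((b - t : ℕ) : ℝ≥0∞) * ((∑ j, a j) * Pfun b a t) := by
  obtain ⟨s, rfl⟩ : ∃ s, t = s + 1 := ⟨t - 1, by omega⟩
  rcases le_or_gt (s + 1) b with hsb | hsb
  · have hb : (b : ℝ≥0∞) = ((s + 1 : ℕ) : ℝ≥0∞) + ((b - (s+1) : ℕ) : ℝ≥0∞) := by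
      rw [← Nat.cast_add]
      congr 1
      omega
    rw [hb, add_mul, identity_i a]
    have h2 := identity_ii (b := b) (s := s) a
    calc ((s+1 : ℕ) : ℝ≥0∞) * Pfun b a (s+2) + ((b - (s+1) : ℕ) : ℝ≥0∞) * Pfun b a (s+2)
        ≤ ((s+1 : ℕ) : ℝ≥0∞) * (((b - (s+1) : ℕ) : ℝ≥0∞) * Qfun b a s)
            + ((b - (s+1) : ℕ) : ℝ≥0∞) * Pfun b a (s+2) := by
          exact add_le_add_left (mul_le_mul_right h2 _) _
      _ = ((b - (s+1) : ℕ) : ℝ≥0∞) * ((s+1 : ℕ) * Qfun b a s + Pfun b a (s+2)) := by ring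
  · have : Pfun b a (s+1+1) = 0 := by
      rw [Pfun]
      apply Finset.sum_eq_zero
      intro k hk
      simp only [Finset.mem_filter, Finset.mem_univ, true_and] at hk
      exfalso
      have := Fintype.card_le_of_injective k hk
      simp at this
      omega
    rw [this]
    simp

private lemma main_ineq {b : ℕ} (a : Fin b → ℝ≥0∞) (t : ℕ) (ht : 1 ≤ t) :
    (b : ℝ≥0∞) ^ t * Pfun b a t
      ≤ (∏ i ∈ Finset.range t, ((b - i : ℕ) : ℝ≥0∞)) * (∑ j, a j) ^ t := by
  induction t, ht using Nat.le_induction with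
  | base =>
    have hP1 : Pfun b a 1 = ∑ j, a j := by
      calc Pfun b a 1
          = ∑ k : Fin 1 → Fin b, a (k 0) := by
            rw [Pfun,
              Finset.filter_true_of_mem (fun k _ => Function.injective_of_subsingleton k)]
            exact Finset.sum_congr rfl fun k _ => Fin.prod_univ_one _
        _ = ∑ j, a j := Equiv.sum_comp (Equiv.funUnique (Fin 1) (Fin b)) a
    rw [hP1]
    simp [pow_one]
  | succ n hn ih =>
    calc (b : ℝ≥0∞) ^ (n+1) * Pfun b a (n+1)
        = (b : ℝ≥0∞) ^ n * ((b : ℝ≥0∞) * Pfun b a (n+1)) := by rw [pow_succ]; ring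
      _ ≤ (b : ℝ≥0∞) ^ n * (((b - n : ℕ) : ℝ≥0∞) * ((∑ j, a j) * Pfun b a n)) :=
          mul_le_mul_right (step_ineq hn a) _
      _ = ((b - n : ℕ) : ℝ≥0∞) * (∑ j, a j) * ((b : ℝ≥0∞) ^ n * Pfun b a n) := by ring
      _ ≤ ((b - n : ℕ) : ℝ≥0∞) * (∑ j, a j)
            * ((∏ i ∈ Finset.range n, ((b - i : ℕ) : ℝ≥0∞)) * (∑ j, a j) ^ n) :=
          mul_le_mul_right ih _
      _ = (∏ i ∈ Finset.range (n+1), ((b - i : ℕ) : ℝ≥0∞)) * (∑ j, a j) ^ (n+1) := by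
          rw [Finset.prod_range_succ, pow_succ]; ring
private lemma card_inj_cast {b N : ℕ} (hNb : N ≤ b) :
    ((Finset.univ.filter fun k : Fin N → Fin b => Function.Injective k).card : ℝ≥0∞)
      = ∏ i ∈ Finset.range N, ((b - i : ℕ) : ℝ≥0∞) := by
  have h := sum_inj_castLE (b := b) (t := 0) (fun _ => (1:ℝ≥0∞)) N hNb (Nat.zero_le N)
  have h0 : (∑ k ∈ Finset.univ.filter fun k : Fin 0 → Fin b => Function.Injective k,
      (1:ℝ≥0∞)) = 1 := by
    rw [Finset.filter_true_of_mem (fun k _ => Function.injective_of_subsingleton k)]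
    simp
  rw [h0, mul_one] at h
  rw [Finset.range_eq_Ico, ← h, Finset.sum_const, nsmul_eq_mul, mul_one]

/-- Generalized stratified sampling: choosing uniformly a random injection of the N point
indices into the β strata (equivalently: a uniform N-subset of strata plus a uniform random
permutation of the points) and placing one point uniformly and independently in each chosen
stratum. The theorem states the negative dependence property
P(p_1 ∈ A, ..., p_t ∈ A) ≤ λ(A)^t for every measurable A and every 1 ≤ t ≤ N. -/
theorem stmt_4 {d N β : ℕ} (hN : 0 < N) (hβ : N ≤ β)
    (B : Fin β → Set (Fin d → ℝ)) (hBmeas : ∀ j, MeasurableSet (B j))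
    (hBdisj : Pairwise (Function.onFun Disjoint B))
    (hBunion : ⋃ j, B j = Set.univ.pi fun _ => Set.Ico (0 : ℝ) 1)
    (hBvol : ∀ j, volume (B j) = (β : ℝ≥0∞)⁻¹)
    -- the joint law of the N sample points:
    (μ : Measure (Fin N → (Fin d → ℝ)))
    (hμ : μ = ((Finset.univ.filter fun k : Fin N → Fin β =>
        Function.Injective k).card : ℝ≥0∞)⁻¹ •
      ∑ k ∈ Finset.univ.filter fun k : Fin N → Fin β => Function.Injective k,
        Measure.pi fun j => (β : ℝ≥0∞) • volume.restrict (B (k j)))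
    (A : Set (Fin d → ℝ)) (hA : MeasurableSet A)
    (hA' : A ⊆ Set.univ.pi fun _ => Set.Ico (0 : ℝ) 1)
    (t : ℕ) (ht : 1 ≤ t) (htN : t ≤ N) :
    μ {x | ∀ j : Fin N, (j : ℕ) < t → x j ∈ A} ≤ volume A ^ t := by
  have hb0 : 0 < β := lt_of_lt_of_le hN hβ
  have hbE0 : (β:ℝ≥0∞) ≠ 0 := by exact_mod_cast hb0.ne'
  have hbtop : (β:ℝ≥0∞) ≠ ⊤ := ENNReal.natCast_ne_top β
  set a : Fin β → ℝ≥0∞ := fun i => (β:ℝ≥0∞) * volume (A ∩ B i) with ha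
  have hone : ∀ i, (β:ℝ≥0∞) * volume (B i) = 1 := by
    intro i; rw [hBvol i, ENNReal.mul_inv_cancel hbE0 hbtop]
  have hV : ∑ i, volume (A ∩ B i) = volume A := by
    have hcover : (⋃ i, A ∩ B i) = A := by
      rw [← Set.inter_iUnion, hBunion, Set.inter_eq_left]
      exact hA'
    have hdisj : Pairwise (Function.onFun Disjoint fun i => A ∩ B i) := fun i j hij =>
      (hBdisj hij).mono Set.inter_subset_right Set.inter_subset_right
    calc ∑ i, volume (A ∩ B i) = ∑' i, volume (A ∩ B i) := (tsum_fintype _).symm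
      _ = volume (⋃ i, A ∩ B i) := (measure_iUnion hdisj fun i => hA.inter (hBmeas i)).symm
      _ = volume A := by rw [hcover]
  have hS : ∑ j, a j = (β:ℝ≥0∞) * volume A := by
    rw [← hV, Finset.mul_sum]
  haveI hfin : ∀ (k : Fin N → Fin β) (j : Fin N),
      IsFiniteMeasure ((β:ℝ≥0∞) • volume.restrict (B (k j))) := by
    intro k j
    constructor
    rw [Measure.smul_apply, smul_eq_mul, Measure.restrict_apply_univ, hone]
    exact ENNReal.one_lt_top
  have hset : {x : Fin N → (Fin d → ℝ) | ∀ j : Fin N, (j : ℕ) < t → x j ∈ A}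
      = Set.pi Set.univ fun j : Fin N => if (j:ℕ) < t then A else Set.univ := by
    ext x
    simp only [Set.mem_setOf_eq, Set.mem_pi, Set.mem_univ, true_implies]
    constructor
    · intro h j
      split_ifs with hj
      · exact h j hj
      · trivial
    · intro h j hj
      have := h j
      rwa [if_pos hj] at this
  rw [hμ, hset, Measure.smul_apply, smul_eq_mul, Measure.finset_sum_apply]
  have hpik : ∀ k ∈ Finset.univ.filter fun k : Fin N → Fin β => Function.Injective k,
      (Measure.pi fun j => (β : ℝ≥0∞) • volume.restrict (B (k j)))
          (Set.pi Set.univ fun j : Fin N => if (j:ℕ) < t then A else Set.univ)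
        = ∏ i : Fin t, a (k (Fin.castLE htN i)) := by
    intro k _
    rw [Measure.pi_pi]
    have hfac : ∀ j : Fin N,
        ((β:ℝ≥0∞) • volume.restrict (B (k j))) (if (j:ℕ) < t then A else Set.univ)
        = if (j:ℕ) < t then a (k j) else 1 := by
      intro j
      split_ifs with hj
      · rw [Measure.smul_apply, smul_eq_mul, Measure.restrict_apply hA]
      · rw [Measure.smul_apply, smul_eq_mul, Measure.restrict_apply_univ, hone]
    rw [Finset.prod_congr rfl fun j _ => hfac j, ← Finset.prod_filter]
    refine Finset.prod_bij'
      (i := fun (j : Fin N) (hj : j ∈ Finset.univ.filter fun j : Fin N => (j:ℕ) < t) =>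
        (⟨(j:ℕ), (Finset.mem_filter.mp hj).2⟩ : Fin t))
      (j := fun (i : Fin t) _ => Fin.castLE htN i) ?_ ?_ ?_ ?_ ?_
    · intro _ _; exact Finset.mem_univ _
    · intro i _
      simp only [Finset.mem_filter, Finset.mem_univ, true_and, Fin.coe_castLE]
      exact i.2
    · intro j _; exact Fin.ext rfl
    · intro i _; exact Fin.ext rfl
    · intro j hj; exact congrArg (fun z => a (k z)) (Fin.ext rfl)
  rw [Finset.sum_congr rfl hpik]
  rw [sum_inj_castLE (fun k' : Fin t → Fin β => ∏ i : Fin t, a (k' i)) N hβ htN]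
  -- key bound : Pfun ≤ (∏_{range t} (β-i)) * (volume A)^t
  have hPle : Pfun β a t ≤ (∏ i ∈ Finset.range t, ((β - i : ℕ) : ℝ≥0∞)) * volume A ^ t := by
    have h := main_ineq a t ht
    rw [hS, mul_pow] at h
    have h2 : (β:ℝ≥0∞) ^ t * Pfun β a t
        ≤ (β:ℝ≥0∞) ^ t * ((∏ i ∈ Finset.range t, ((β - i : ℕ) : ℝ≥0∞)) * volume A ^ t) := by
      calc (β:ℝ≥0∞) ^ t * Pfun β a t
          ≤ (∏ i ∈ Finset.range t, ((β - i : ℕ) : ℝ≥0∞)) * ((β:ℝ≥0∞) ^ t * volume A ^ t) := h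
        _ = (β:ℝ≥0∞) ^ t * ((∏ i ∈ Finset.range t, ((β - i : ℕ) : ℝ≥0∞)) * volume A ^ t) := by
            ring
    exact (ENNReal.mul_le_mul_iff_right (pow_ne_zero t hbE0) (ENNReal.pow_ne_top hbtop)).mp h2
  have hcard : ((Finset.univ.filter fun k : Fin N → Fin β =>
      Function.Injective k).card : ℝ≥0∞)
      = (∏ i ∈ Finset.range t, ((β - i : ℕ) : ℝ≥0∞))
        * ∏ i ∈ Finset.Ico t N, ((β - i : ℕ) : ℝ≥0∞) := by
    rw [card_inj_cast hβ, Finset.prod_range_mul_prod_Ico _ htN]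
  have hc0 : ((Finset.univ.filter fun k : Fin N → Fin β =>
      Function.Injective k).card : ℝ≥0∞) ≠ 0 := by
    rw [Nat.cast_ne_zero, ← Nat.pos_iff_ne_zero, Finset.card_pos]
    exact ⟨Fin.castLE hβ, by simp [Fin.castLE_injective hβ]⟩
  have hctop : ((Finset.univ.filter fun k : Fin N → Fin β =>
      Function.Injective k).card : ℝ≥0∞) ≠ ⊤ := ENNReal.natCast_ne_top _
  calc ((Finset.univ.filter fun k : Fin N → Fin β => Function.Injective k).card : ℝ≥0∞)⁻¹
        * ((∏ i ∈ Finset.Ico t N, ((β - i : ℕ) : ℝ≥0∞)) * Pfun β a t)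
      ≤ ((Finset.univ.filter fun k : Fin N → Fin β => Function.Injective k).card : ℝ≥0∞)⁻¹
        * ((∏ i ∈ Finset.Ico t N, ((β - i : ℕ) : ℝ≥0∞))
          * ((∏ i ∈ Finset.range t, ((β - i : ℕ) : ℝ≥0∞)) * volume A ^ t)) :=
        mul_le_mul_right (mul_le_mul_right hPle _) _
    _ = ((Finset.univ.filter fun k : Fin N → Fin β => Function.Injective k).card : ℝ≥0∞)⁻¹
        * (((Finset.univ.filter fun k : Fin N → Fin β => Function.Injective k).card : ℝ≥0∞)
          * volume A ^ t) := by
        rw [hcard]; ring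
    _ = volume A ^ t := by
        rw [← mul_assoc, ENNReal.inv_mul_cancel hc0 hctop, one_mul]
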